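/- Let g : ℕ → ℕ be strictly increasing and define u_{2k} = 4^{g(k)} + ε_k, u_{2k+1} = 4^{g(k)} + ε_k + k for k ≥ 1, with ε_k = 1 iff k ≡ 2 (mod 3), else 0. Then for all k ≥ 2, if u ∈ {u_{2k}, u_{2k+1}} and u' ∈ {u_{2j}, u_{2j+1}} for some j < k, then u - u' > u/2. -/

import Mathlib

theorem stmt_5 (g : ℕ → ℕ) (hg : StrictMono g) (u : ℕ → ℕ)
    (hu_even : ∀ k, 1 ≤ k → u (2 * k) = 4 ^ g k + (if k % 3 = 2 then 1 else 0))
    (hu_odd : ∀ k, 1 ≤ k →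
      u (2 * k + 1) = 4 ^ g k + (if k % 3 = 2 then 1 else 0) + k) :
    ∀ k, 2 ≤ k → ∀ j, 1 ≤ j → j < k →
      ∀ v ∈ ({u (2 * k), u (2 * k + 1)} : Set ℕ),
      ∀ v' ∈ ({u (2 * j), u (2 * j + 1)} : Set ℕ),
        (v : ℚ) - (v' : ℚ) > (v : ℚ) / 2 := by
  intro k hk j hj hjk v hv v' hv'
  have hk1 : 1 ≤ k := le_trans (by norm_num) hk
  have hgjk : g j + 1 ≤ g k := hg hjk
  have hjgj : j ≤ g j := hg.le_apply
  -- j + 1 < 4 ^ g j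
  have hj4 : j + 1 < 4 ^ g j := by
    calc j + 1 < 2 ^ (j + 1) := Nat.lt_two_pow_self
    _ ≤ 2 ^ (2 * j) := Nat.pow_le_pow_right (by norm_num) (by omega)
    _ = 4 ^ j := by rw [pow_mul]; norm_num
    _ ≤ 4 ^ g j := Nat.pow_le_pow_right (by norm_num) hjgj
  -- bounds
  have hvlb : 4 ^ g k ≤ v := by
    rcases hv with h | h <;>
      subst h <;> [rw [hu_even k hk1]; rw [hu_odd k hk1]] <;> split <;> omega
  have hv'ub : v' ≤ 4 ^ g j + 1 + j := by
    rcases hv' with h | h <;>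
      subst h <;> [rw [hu_even j hj]; rw [hu_odd j hj]] <;> split <;> omega
  have hpow : 4 * 4 ^ g j ≤ 4 ^ g k := by
    calc 4 * 4 ^ g j = 4 ^ (g j + 1) := (pow_succ' 4 (g j)).symm
    _ ≤ 4 ^ g k := Nat.pow_le_pow_right (by norm_num) hgjk
  have key : 2 * v' < v := by omega
  have hvq : (0 : ℚ) ≤ (v : ℚ) := by positivity
  have : (2 : ℚ) * v' < v := by exact_mod_cast key
  linarith
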